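/- Let F, G : [a,b] × [c,d] → ℝ, and let {t_i^{(k)}} and {s_j^{(k')}} be nested dyadic-refining sequences of partitions of [a,b] and [c,d] with mesh bounds |t_{i}^{(k)} − t_{i-1}^{(k)}| < 4·2^{-k} and |s_j^{(k')} − s_{j-1}^{(k')}| < 4·2^{-k'}. Suppose λ, μ, ρ, σ are non-decreasing functions with ρ(u)σ(u) = u, F has finite (p,q)-bivariation, and |Δ_iΔ_j G(x_i, y_j)| ≤ λ(x_i − x_{i-1}) μ(y_j − y_{j-1}) for every pair of adjacent points in any partition. Define S_{n,n'} = Σ_{i=1}^{2^n} Σ_{j=1}^{2^{n'}} F(t_i^{(n)}, s_j^{(n')}) Δ_iΔ_j G(t_i^{(n)}, s_j^{(n')}). Then |S_{M,M'} − S_{0,M'} − S_{M,0} + S_{0,0}| ≤ 16 (Σ_{m=1}^∞ ρ(‖F‖_{1;p}/m^{1/p}) λ(4/m)) (Σ_{m'=1}^∞ σ(‖F‖_{2;q}/m'^{1/q}) μ(4/m')). -/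

import Mathlib

open Set

noncomputable section

/-- Rectangular increment of a two-variable function. -/
def rect (H : ℝ → ℝ → ℝ) (x x' y y' : ℝ) : ℝ :=
  H x' y' - H x y' - H x' y + H x y

/-- `t` is a (monotone) partition of `[a,b]`. -/
def IsPartition {n : ℕ} (a b : ℝ) (t : Fin (n + 1) → ℝ) : Prop :=
  Monotone t ∧ t 0 = a ∧ t (Fin.last n) = b

/-- The set of `p`-variation sums of `f` over partitions of `[a,b]`. -/
def pVarSet (p a b : ℝ) (f : ℝ → ℝ) : Set ℝ :=
  {v | ∃ (n : ℕ) (t : Fin (n + 1) → ℝ), IsPartition a b t ∧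
        v = ∑ i : Fin n, |f (t i.succ) - f (t i.castSucc)| ^ p}

/-- The `p`-variation seminorm `‖f‖_{[a,b],p}`. -/
def pVarNorm (p a b : ℝ) (f : ℝ → ℝ) : ℝ :=
  sSup (pVarSet p a b f) ^ (1 / p)

def biVar1Set (p a b c d : ℝ) (F : ℝ → ℝ → ℝ) : Set ℝ :=
  {v | ∃ y₁ ∈ Icc c d, ∃ y₂ ∈ Icc c d, v = pVarNorm p a b (fun x => F x y₁ - F x y₂)}

/-- The first bivariation seminorm `‖F‖_{1;p}`. -/
def biVar1 (p a b c d : ℝ) (F : ℝ → ℝ → ℝ) : ℝ := sSup (biVar1Set p a b c d F)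

def biVar2Set (q a b c d : ℝ) (F : ℝ → ℝ → ℝ) : Set ℝ :=
  {v | ∃ x₁ ∈ Icc a b, ∃ x₂ ∈ Icc a b, v = pVarNorm q c d (fun y => F x₁ y - F x₂ y)}

/-- The second bivariation seminorm `‖F‖_{2;q}`. -/
def biVar2 (q a b c d : ℝ) (F : ℝ → ℝ → ℝ) : ℝ := sSup (biVar2Set q a b c d F)

/-- `‖F‖_{1;p} < ∞`: all the suprema involved are finite. -/
def FiniteBiVar1 (p a b c d : ℝ) (F : ℝ → ℝ → ℝ) : Prop :=
  (∀ y₁ ∈ Icc c d, ∀ y₂ ∈ Icc c d,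
      BddAbove (pVarSet p a b (fun x => F x y₁ - F x y₂))) ∧
  BddAbove (biVar1Set p a b c d F)

/-- `‖F‖_{2;q} < ∞`: all the suprema involved are finite. -/
def FiniteBiVar2 (q a b c d : ℝ) (F : ℝ → ℝ → ℝ) : Prop :=
  (∀ x₁ ∈ Icc a b, ∀ x₂ ∈ Icc a b,
      BddAbove (pVarSet q c d (fun y => F x₁ y - F x₂ y))) ∧
  BddAbove (biVar2Set q a b c d F)

/-! ### Auxiliary lemmas for the Young dyadic estimate -/

lemma young_sum_pair (n : ℕ) (v : ℕ → ℝ) :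
    ∑ i ∈ Finset.range (2*n), v i = ∑ i ∈ Finset.range n, (v (2*i) + v (2*i+1)) := by
  induction n with
  | zero => simp
  | succ n ih =>
    rw [show 2*(n+1) = 2*n+1+1 by ring, Finset.sum_range_succ, Finset.sum_range_succ,
      Finset.sum_range_succ, ← ih]
    ring

lemma young_min_le_rho_sigma (ρ σ : ℝ → ℝ) (hρ : MonotoneOn ρ (Set.Ici 0))
    (hσ : MonotoneOn σ (Set.Ici 0))
    (hρ0 : ∀ u ≥ (0:ℝ), 0 ≤ ρ u) (hσ0 : ∀ u ≥ (0:ℝ), 0 ≤ σ u)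
    (hρσ : ∀ u ≥ (0:ℝ), ρ u * σ u = u) (A B : ℝ) (hA : 0 ≤ A) (hB : 0 ≤ B) :
    min A B ≤ ρ A * σ B := by
  rcases le_total A B with h | h
  · calc min A B ≤ A := min_le_left _ _
      _ = ρ A * σ A := (hρσ A hA).symm
      _ ≤ ρ A * σ B := mul_le_mul_of_nonneg_left (hσ hA (le_trans hA h) h) (hρ0 A hA)
  · calc min A B ≤ B := min_le_right _ _
      _ = ρ B * σ B := (hρσ B hB).symm
      _ ≤ ρ A * σ B := mul_le_mul_of_nonneg_right (hρ hB (le_trans hB h) h) (hσ0 B hB)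

lemma young_holder_sum {p : ℝ} (hp : 1 ≤ p) (N : ℕ) (hN : 0 < N) (c : ℕ → ℝ)
    (hc : ∀ i ∈ Finset.range N, 0 ≤ c i) (V : ℝ) (hV : 0 ≤ V)
    (h : ∑ i ∈ Finset.range N, (c i) ^ p ≤ V ^ p) :
    ∑ i ∈ Finset.range N, c i ≤ (N : ℝ) * (V / (N:ℝ) ^ (1/p)) := by
  have hp0 : (0:ℝ) < p := lt_of_lt_of_le one_pos hp
  have hNR : (0:ℝ) < (N:ℝ) := by exact_mod_cast hN
  have key := Real.arith_mean_le_rpow_mean (Finset.range N) (fun _ => 1/(N:ℝ)) c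
    (fun i _ => by positivity) (by simp [Finset.sum_const]; field_simp) hc hp
  have h1 : ∑ i ∈ Finset.range N, (1/(N:ℝ)) * c i = (∑ i ∈ Finset.range N, c i) / N := by
    simp only [one_div, inv_mul_eq_div, ← Finset.sum_div]
  have h2 : ∑ i ∈ Finset.range N, (1/(N:ℝ)) * c i ^ p = (∑ i ∈ Finset.range N, c i ^ p) / N := by
    simp only [one_div, inv_mul_eq_div, ← Finset.sum_div]
  rw [h1, h2] at key
  have h3 : ((∑ i ∈ Finset.range N, c i ^ p) / N) ^ (1/p) ≤ (V ^ p / N) ^ (1/p) := by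
    apply Real.rpow_le_rpow
    · apply div_nonneg _ (le_of_lt hNR)
      exact Finset.sum_nonneg fun i hi => Real.rpow_nonneg (hc i hi) p
    · gcongr
    · positivity
  have h4 : (V ^ p / (N:ℝ)) ^ (1/p) = V / (N:ℝ) ^ (1/p) := by
    rw [Real.div_rpow (by positivity) (le_of_lt hNR)]
    congr 1
    rw [← Real.rpow_mul hV, mul_one_div, div_self (ne_of_gt hp0), Real.rpow_one]
  have h5 := (key.trans h3).trans_eq h4
  calc ∑ i ∈ Finset.range N, c i = (N:ℝ) * ((∑ i ∈ Finset.range N, c i)/N) := by field_simp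
    _ ≤ (N:ℝ) * (V / (N:ℝ) ^ (1/p)) := mul_le_mul_of_nonneg_left h5 (le_of_lt hNR)

lemma young_pvar_bound {p a b : ℝ} (hp : 1 ≤ p) (g : ℝ → ℝ)
    (hbdd : BddAbove (pVarSet p a b g)) (V : ℝ) (hV : pVarNorm p a b g ≤ V)
    (N : ℕ) (x : ℕ → ℝ) (hmono : ∀ i j : ℕ, i ≤ j → j ≤ 2*N → x i ≤ x j)
    (hx0 : x 0 = a) (hxN : x (2*N) = b) :
    ∑ i ∈ Finset.range N, |g (x (2*i+1)) - g (x (2*i+2))| ^ p ≤ V ^ p := by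
  have hp0 : (0:ℝ) < p := lt_of_lt_of_le one_pos hp
  set h : ℕ → ℝ := fun r => |g (x (r+1)) - g (x r)| ^ p with hh
  have hnonneg : ∀ r, 0 ≤ h r := fun r => Real.rpow_nonneg (abs_nonneg _) p
  have hfull : (∑ r ∈ Finset.range (2*N), h r) ∈ pVarSet p a b g := by
    refine ⟨2*N, fun r => x r, ⟨?_, ?_, ?_⟩, ?_⟩
    · intro r r' hrr'
      exact hmono r r' hrr' (Nat.lt_succ_iff.mp r'.isLt)
    · simpa using hx0
    · simpa using hxN
    · rw [← Fin.sum_univ_eq_sum_range h (2*N)]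
      refine Finset.sum_congr rfl fun r _ => ?_
      simp [hh, Fin.val_succ, Fin.coe_castSucc, abs_sub_comm]
  have hsub : ∑ i ∈ Finset.range N, |g (x (2*i+1)) - g (x (2*i+2))| ^ p
      ≤ ∑ r ∈ Finset.range (2*N), h r := by
    rw [young_sum_pair]
    refine Finset.sum_le_sum fun i _ => ?_
    have he : |g (x (2*i+1)) - g (x (2*i+2))| ^ p = h (2*i+1) := by
      simp only [hh]
      rw [abs_sub_comm]
    rw [he]
    exact le_add_of_nonneg_left (hnonneg _)
  have hle : (∑ r ∈ Finset.range (2*N), h r) ≤ sSup (pVarSet p a b g) :=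
    le_csSup hbdd hfull
  have h0 : 0 ≤ sSup (pVarSet p a b g) :=
    le_trans (Finset.sum_nonneg fun r _ => hnonneg r) hle
  have h0' : 0 ≤ pVarNorm p a b g := Real.rpow_nonneg h0 _
  have hEq : sSup (pVarSet p a b g) = (pVarNorm p a b g) ^ p := by
    rw [pVarNorm, ← Real.rpow_mul h0, one_div_mul_cancel (ne_of_gt hp0), Real.rpow_one]
  have hfin : sSup (pVarSet p a b g) ≤ V ^ p := by
    rw [hEq]
    exact Real.rpow_le_rpow h0' hV (le_of_lt hp0)
  exact hsub.trans (hle.trans hfin)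

lemma young_pVarNorm_nonneg {p a b : ℝ} (hab : a ≤ b) (g : ℝ → ℝ)
    (hbdd : BddAbove (pVarSet p a b g)) : 0 ≤ pVarNorm p a b g := by
  have hmem : (∑ i : Fin 1,
      |g ((fun r : Fin 2 => if (r:ℕ) = 0 then a else b) i.succ)
        - g ((fun r : Fin 2 => if (r:ℕ) = 0 then a else b) i.castSucc)| ^ p)
      ∈ pVarSet p a b g := by
    refine ⟨1, fun r : Fin 2 => if (r:ℕ) = 0 then a else b, ⟨?_, ?_, ?_⟩, rfl⟩
    · intro i j hij
      fin_cases i <;> fin_cases j <;> simp_all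
    · simp
    · simp [Fin.last]
  have h0 : 0 ≤ sSup (pVarSet p a b g) := by
    refine le_trans ?_ (le_csSup hbdd hmem)
    exact Finset.sum_nonneg fun i _ => Real.rpow_nonneg (abs_nonneg _) p
  exact Real.rpow_nonneg h0 _

lemma young_D_eq (F G : ℝ → ℝ → ℝ) (N N' : ℕ) (x y : ℕ → ℝ) :
    (∑ i ∈ Finset.range (2*N), ∑ j ∈ Finset.range (2*N'),
        F (x (i+1)) (y (j+1)) * rect G (x i) (x (i+1)) (y j) (y (j+1)))
    - (∑ i ∈ Finset.range N, ∑ j ∈ Finset.range (2*N'),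
        F (x (2*(i+1))) (y (j+1)) * rect G (x (2*i)) (x (2*(i+1))) (y j) (y (j+1)))
    - (∑ i ∈ Finset.range (2*N), ∑ j ∈ Finset.range N',
        F (x (i+1)) (y (2*(j+1))) * rect G (x i) (x (i+1)) (y (2*j)) (y (2*(j+1))))
    + (∑ i ∈ Finset.range N, ∑ j ∈ Finset.range N',
        F (x (2*(i+1))) (y (2*(j+1))) * rect G (x (2*i)) (x (2*(i+1))) (y (2*j)) (y (2*(j+1))))
    = ∑ i ∈ Finset.range N, ∑ j ∈ Finset.range N',
        (F (x (2*i+1)) (y (2*j+1)) - F (x (2*i+2)) (y (2*j+1))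
          - F (x (2*i+1)) (y (2*j+2)) + F (x (2*i+2)) (y (2*j+2)))
          * rect G (x (2*i)) (x (2*i+1)) (y (2*j)) (y (2*j+1)) := by
  simp only [young_sum_pair, ← Finset.sum_add_distrib, ← Finset.sum_sub_distrib]
  refine Finset.sum_congr rfl fun i _ => ?_
  refine Finset.sum_congr rfl fun j _ => ?_
  simp only [rect, show ∀ m : ℕ, 2*m+1+1 = 2*(m+1) from fun m => by ring]
  ring

lemma young_block_le_tsum (ρ lam : ℝ → ℝ)
    (hρ : MonotoneOn ρ (Set.Ici 0)) (hlam : MonotoneOn lam (Set.Ici 0))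
    (hρ0 : ∀ u ≥ (0:ℝ), 0 ≤ ρ u) (hlam0 : ∀ u ≥ (0:ℝ), 0 ≤ lam u)
    (V p : ℝ) (hV : 0 ≤ V) (hp : 1 ≤ p)
    (hSum : Summable (fun m : ℕ => ρ (V / ((m : ℝ) + 1) ^ (1 / p)) * lam (4 / ((m : ℝ) + 1))))
    (M : ℕ) :
    ∑ k ∈ Finset.range M, (2:ℝ)^k * ρ (V / ((2:ℝ)^k) ^ (1/p)) * lam (4 / (2:ℝ)^(k+1))
      ≤ 2 * ∑' m : ℕ, ρ (V / ((m : ℝ) + 1) ^ (1 / p)) * lam (4 / ((m : ℝ) + 1)) := by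
  have hp0 : (0:ℝ) < p := lt_of_lt_of_le one_pos hp
  set f : ℕ → ℝ := fun m => ρ (V / ((m : ℝ) + 1) ^ (1 / p)) * lam (4 / ((m : ℝ) + 1)) with hf
  have hfnn : ∀ m, 0 ≤ f m := by
    intro m
    exact mul_nonneg (hρ0 _ (by positivity)) (hlam0 _ (by positivity))
  set block : ℕ → Finset ℕ := fun k => Finset.Ico (2^k/2) (2^k) with hblock
  have hlevel : ∀ k : ℕ,
      (2:ℝ)^k * ρ (V / ((2:ℝ)^k) ^ (1/p)) * lam (4 / (2:ℝ)^(k+1)) ≤ 2 * ∑ m ∈ block k, f m := by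
    intro k
    have hterm : ∀ m ∈ block k,
        ρ (V / ((2:ℝ)^k) ^ (1/p)) * lam (4 / (2:ℝ)^(k+1)) ≤ f m := by
      intro m hm
      simp only [hblock, Finset.mem_Ico] at hm
      have hm1 : ((m:ℝ)+1) ≤ (2:ℝ)^k := by
        have h1 : (m:ℕ)+1 ≤ 2^k := hm.2
        exact_mod_cast h1
      have hm0 : (0:ℝ) < (m:ℝ)+1 := by positivity
      refine mul_le_mul ?_ ?_ (hlam0 _ (by positivity)) (hρ0 _ ?_)
      · apply hρ (Set.mem_Ici.2 (by positivity)) (Set.mem_Ici.2 (by positivity))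
        apply div_le_div_of_nonneg_left hV ?_ ?_ |>.trans_eq rfl
        · positivity
        · exact Real.rpow_le_rpow (le_of_lt hm0) hm1 (by positivity)
      · apply hlam (Set.mem_Ici.2 (by positivity)) (Set.mem_Ici.2 (by positivity))
        apply div_le_div_of_nonneg_left (by norm_num) hm0 ?_
        calc ((m:ℝ)+1) ≤ (2:ℝ)^k := hm1
          _ ≤ (2:ℝ)^(k+1) := by
            apply pow_le_pow_right₀ (by norm_num) (Nat.le_succ k)
      · positivity
    have hcard : (block k).card = 2^k - 2^k/2 := by
      simp [hblock]
    have hcard2 : (2:ℝ)^k ≤ 2 * ((block k).card : ℝ) := by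
      rw [hcard]
      have h1 : (2:ℕ)^k ≤ 2 * (2^k - 2^k/2) := by omega
      calc (2:ℝ)^k = ((2^k : ℕ) : ℝ) := by push_cast; ring
        _ ≤ ((2 * (2^k - 2^k/2) : ℕ) : ℝ) := Nat.cast_le.2 h1
        _ = 2 * ((2^k - 2^k/2 : ℕ) : ℝ) := by push_cast; ring
    have hsumge := Finset.card_nsmul_le_sum (block k) f _ hterm
    rw [nsmul_eq_mul] at hsumge
    have hXnn : 0 ≤ ρ (V / ((2:ℝ)^k) ^ (1/p)) * lam (4 / (2:ℝ)^(k+1)) :=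
      mul_nonneg (hρ0 _ (by positivity)) (hlam0 _ (by positivity))
    calc (2:ℝ)^k * ρ (V / ((2:ℝ)^k) ^ (1/p)) * lam (4 / (2:ℝ)^(k+1))
        = (2:ℝ)^k * (ρ (V / ((2:ℝ)^k) ^ (1/p)) * lam (4 / (2:ℝ)^(k+1))) := by ring
      _ ≤ (2 * ((block k).card : ℝ)) * (ρ (V / ((2:ℝ)^k) ^ (1/p)) * lam (4 / (2:ℝ)^(k+1))) :=
          mul_le_mul_of_nonneg_right hcard2 hXnn
      _ = 2 * (((block k).card : ℝ) * (ρ (V / ((2:ℝ)^k) ^ (1/p)) * lam (4 / (2:ℝ)^(k+1)))) := by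
          ring
      _ ≤ 2 * ∑ m ∈ block k, f m := by linarith
  have hdj : ∀ k l : ℕ, k < l → Disjoint (block k) (block l) := by
    intro k l hkl
    rw [Finset.disjoint_left]
    intro m hmk hml
    simp only [hblock, Finset.mem_Ico] at hmk hml
    have h1 : 2^(k+1) ≤ 2^l := Nat.pow_le_pow_right (by norm_num) hkl
    have h2 : (2:ℕ)^k ≤ 2^l/2 := by
      rw [Nat.le_div_iff_mul_le (by norm_num)]
      calc 2^k * 2 = 2^(k+1) := (pow_succ 2 k).symm
        _ ≤ 2^l := h1
    omega
  have hpd : (↑(Finset.range M) : Set ℕ).PairwiseDisjoint block := by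
    intro k _ l _ hne
    rcases Ne.lt_or_gt hne with h | h
    · exact hdj k l h
    · exact (hdj l k h).symm
  calc ∑ k ∈ Finset.range M, (2:ℝ)^k * ρ (V / ((2:ℝ)^k) ^ (1/p)) * lam (4 / (2:ℝ)^(k+1))
      ≤ ∑ k ∈ Finset.range M, 2 * ∑ m ∈ block k, f m :=
        Finset.sum_le_sum fun k _ => hlevel k
    _ = 2 * ∑ k ∈ Finset.range M, ∑ m ∈ block k, f m := by rw [Finset.mul_sum]
    _ = 2 * ∑ m ∈ (Finset.range M).biUnion block, f m := by rw [Finset.sum_biUnion hpd]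
    _ ≤ 2 * ∑' m : ℕ, f m := by
        have h6 := Summable.sum_le_tsum ((Finset.range M).biUnion block) (fun i _ => hfnn i) hSum
        linarith

lemma young_level_bound (a b c d p q : ℝ) (hp : 1 ≤ p) (hq : 1 ≤ q)
    (F G : ℝ → ℝ → ℝ) (lam mu ρ σ : ℝ → ℝ)
    (hlam : MonotoneOn lam (Set.Ici 0)) (hmu : MonotoneOn mu (Set.Ici 0))
    (hlam0 : ∀ u ≥ (0 : ℝ), 0 ≤ lam u) (hmu0 : ∀ u ≥ (0 : ℝ), 0 ≤ mu u)
    (hρ : MonotoneOn ρ (Set.Ici 0)) (hσ : MonotoneOn σ (Set.Ici 0))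
    (hρ0 : ∀ u ≥ (0 : ℝ), 0 ≤ ρ u) (hσ0 : ∀ u ≥ (0 : ℝ), 0 ≤ σ u)
    (hρσ : ∀ u ≥ (0 : ℝ), ρ u * σ u = u)
    (hF1 : FiniteBiVar1 p a b c d F) (hF2 : FiniteBiVar2 q a b c d F)
    (hV1 : 0 ≤ biVar1 p a b c d F) (hV2 : 0 ≤ biVar2 q a b c d F)
    (hG : ∀ x₁ x₂ y₁ y₂ : ℝ, a ≤ x₁ → x₁ ≤ x₂ → x₂ ≤ b → c ≤ y₁ → y₁ ≤ y₂ → y₂ ≤ d →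
      |rect G x₁ x₂ y₁ y₂| ≤ lam (x₂ - x₁) * mu (y₂ - y₁))
    (N N' : ℕ) (hN : 0 < N) (hN' : 0 < N') (x y : ℕ → ℝ)
    (hxmono : ∀ i j : ℕ, i ≤ j → j ≤ 2*N → x i ≤ x j)
    (hxa : x 0 = a) (hxb : x (2*N) = b)
    (hymono : ∀ i j : ℕ, i ≤ j → j ≤ 2*N' → y i ≤ y j)
    (hyc : y 0 = c) (hyd : y (2*N') = d)
    (δ ε : ℝ) (hδ : 0 ≤ δ) (hε : 0 ≤ ε)
    (hxmesh : ∀ i, i < 2*N → x (i+1) - x i ≤ δ)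
    (hymesh : ∀ j, j < 2*N' → y (j+1) - y j ≤ ε) :
    |∑ i ∈ Finset.range N, ∑ j ∈ Finset.range N',
        (F (x (2*i+1)) (y (2*j+1)) - F (x (2*i+2)) (y (2*j+1))
          - F (x (2*i+1)) (y (2*j+2)) + F (x (2*i+2)) (y (2*j+2)))
          * rect G (x (2*i)) (x (2*i+1)) (y (2*j)) (y (2*j+1))|
      ≤ ((N:ℝ) * ρ (biVar1 p a b c d F / (N:ℝ) ^ (1/p)) * lam δ)
        * ((N':ℝ) * σ (biVar2 q a b c d F / (N':ℝ) ^ (1/q)) * mu ε) := by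
  have hNR : (0:ℝ) < (N:ℝ) := by exact_mod_cast hN
  have hNR' : (0:ℝ) < (N':ℝ) := by exact_mod_cast hN'
  set E : ℕ → ℕ → ℝ := fun i j =>
    |F (x (2*i+1)) (y (2*j+1)) - F (x (2*i+2)) (y (2*j+1))
      - F (x (2*i+1)) (y (2*j+2)) + F (x (2*i+2)) (y (2*j+2))| with hE
  set A : ℝ := biVar1 p a b c d F / (N:ℝ) ^ (1/p) with hA
  set B : ℝ := biVar2 q a b c d F / (N':ℝ) ^ (1/q) with hB
  have hA0 : 0 ≤ A := div_nonneg hV1 (Real.rpow_nonneg (le_of_lt hNR) _)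
  have hB0 : 0 ≤ B := div_nonneg hV2 (Real.rpow_nonneg (le_of_lt hNR') _)
  -- membership of the partition points
  have hxmem : ∀ i, i ≤ 2*N → x i ∈ Icc a b := by
    intro i hi
    exact ⟨by rw [← hxa]; exact hxmono 0 i (Nat.zero_le _) hi,
           by rw [← hxb]; exact hxmono i (2*N) hi (le_refl _)⟩
  have hymem : ∀ j, j ≤ 2*N' → y j ∈ Icc c d := by
    intro j hj
    exact ⟨by rw [← hyc]; exact hymono 0 j (Nat.zero_le _) hj,
           by rw [← hyd]; exact hymono j (2*N') hj (le_refl _)⟩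
  -- the rectangle bound
  have hrect : ∀ i ∈ Finset.range N, ∀ j ∈ Finset.range N',
      |rect G (x (2*i)) (x (2*i+1)) (y (2*j)) (y (2*j+1))| ≤ lam δ * mu ε := by
    intro i hi j hj
    have hiN : i < N := Finset.mem_range.1 hi
    have hjN : j < N' := Finset.mem_range.1 hj
    have hx01 : x (2*i) ≤ x (2*i+1) := hxmono _ _ (Nat.le_succ _) (by omega)
    have hy01 : y (2*j) ≤ y (2*j+1) := hymono _ _ (Nat.le_succ _) (by omega)
    have h1 := hG (x (2*i)) (x (2*i+1)) (y (2*j)) (y (2*j+1))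
      (hxmem (2*i) (by omega)).1 hx01 (hxmem (2*i+1) (by omega)).2
      (hymem (2*j) (by omega)).1 hy01 (hymem (2*j+1) (by omega)).2
    refine h1.trans (mul_le_mul ?_ ?_ (hmu0 _ (sub_nonneg.2 hy01)) (hlam0 _ hδ))
    · exact hlam (Set.mem_Ici.2 (sub_nonneg.2 hx01)) (Set.mem_Ici.2 hδ)
        (hxmesh (2*i) (by omega))
    · exact hmu (Set.mem_Ici.2 (sub_nonneg.2 hy01)) (Set.mem_Ici.2 hε)
        (hymesh (2*j) (by omega))
  -- column bound via p-variation and Hölder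
  have hcol : ∀ j ∈ Finset.range N', (∑ i ∈ Finset.range N, E i j) ≤ (N:ℝ) * A := by
    intro j hj
    have hjN : j < N' := Finset.mem_range.1 hj
    have hy1 : y (2*j+1) ∈ Icc c d := hymem _ (by omega)
    have hy2 : y (2*j+2) ∈ Icc c d := hymem _ (by omega)
    have hgb := hF1.1 _ hy1 _ hy2
    have hgn : pVarNorm p a b (fun u => F u (y (2*j+1)) - F u (y (2*j+2)))
        ≤ biVar1 p a b c d F := le_csSup hF1.2 ⟨_, hy1, _, hy2, rfl⟩
    have hvar := young_pvar_bound hp _ hgb _ hgn N x hxmono hxa hxb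
    refine young_holder_sum hp N hN (fun i => E i j) (fun i _ => abs_nonneg _) _ hV1 ?_
    refine le_trans (le_of_eq (Finset.sum_congr rfl fun i _ => ?_)) hvar
    simp only [hE]
    congr 2
    ring
  -- row bound via q-variation and Hölder
  have hrow : ∀ i ∈ Finset.range N, (∑ j ∈ Finset.range N', E i j) ≤ (N':ℝ) * B := by
    intro i hi
    have hiN : i < N := Finset.mem_range.1 hi
    have hx1 : x (2*i+1) ∈ Icc a b := hxmem _ (by omega)
    have hx2 : x (2*i+2) ∈ Icc a b := hxmem _ (by omega)
    have hgb := hF2.1 _ hx1 _ hx2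
    have hgn : pVarNorm q c d (fun v => F (x (2*i+1)) v - F (x (2*i+2)) v)
        ≤ biVar2 q a b c d F := le_csSup hF2.2 ⟨_, hx1, _, hx2, rfl⟩
    have hvar := young_pvar_bound hq _ hgb _ hgn N' y hymono hyc hyd
    refine young_holder_sum hq N' hN' (fun j => E i j) (fun j _ => abs_nonneg _) _ hV2 ?_
    refine le_trans (le_of_eq (Finset.sum_congr rfl fun j _ => ?_)) hvar
    simp only [hE]
    congr 2
    ring
  -- total bound on the E-sum
  have hEtot : ∑ i ∈ Finset.range N, ∑ j ∈ Finset.range N', E i j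
      ≤ (N:ℝ) * (N':ℝ) * min A B := by
    rcases le_total A B with hAB | hAB
    · rw [min_eq_left hAB]
      calc ∑ i ∈ Finset.range N, ∑ j ∈ Finset.range N', E i j
          = ∑ j ∈ Finset.range N', ∑ i ∈ Finset.range N, E i j := Finset.sum_comm
        _ ≤ ∑ _j ∈ Finset.range N', (N:ℝ) * A := Finset.sum_le_sum hcol
        _ = (N':ℝ) * ((N:ℝ) * A) := by
            rw [Finset.sum_const, Finset.card_range, nsmul_eq_mul]
        _ = (N:ℝ) * (N':ℝ) * A := by ring
    · rw [min_eq_right hAB]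
      calc ∑ i ∈ Finset.range N, ∑ j ∈ Finset.range N', E i j
          ≤ ∑ _i ∈ Finset.range N, (N':ℝ) * B := Finset.sum_le_sum hrow
        _ = (N:ℝ) * ((N':ℝ) * B) := by
            rw [Finset.sum_const, Finset.card_range, nsmul_eq_mul]
        _ = (N:ℝ) * (N':ℝ) * B := by ring
  have hKnn : 0 ≤ lam δ * mu ε := mul_nonneg (hlam0 _ hδ) (hmu0 _ hε)
  have hmin : min A B ≤ ρ A * σ B :=
    young_min_le_rho_sigma ρ σ hρ hσ hρ0 hσ0 hρσ A B hA0 hB0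
  calc |∑ i ∈ Finset.range N, ∑ j ∈ Finset.range N',
        (F (x (2*i+1)) (y (2*j+1)) - F (x (2*i+2)) (y (2*j+1))
          - F (x (2*i+1)) (y (2*j+2)) + F (x (2*i+2)) (y (2*j+2)))
          * rect G (x (2*i)) (x (2*i+1)) (y (2*j)) (y (2*j+1))|
      ≤ ∑ i ∈ Finset.range N, ∑ j ∈ Finset.range N',
          E i j * (lam δ * mu ε) := by
        refine le_trans (Finset.abs_sum_le_sum_abs _ _) (Finset.sum_le_sum fun i hi => ?_)
        refine le_trans (Finset.abs_sum_le_sum_abs _ _) (Finset.sum_le_sum fun j hj => ?_)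
        rw [abs_mul]
        exact mul_le_mul_of_nonneg_left (hrect i hi j hj) (abs_nonneg _)
    _ = (∑ i ∈ Finset.range N, ∑ j ∈ Finset.range N', E i j) * (lam δ * mu ε) := by
        simp only [← Finset.sum_mul]
    _ ≤ ((N:ℝ) * (N':ℝ) * min A B) * (lam δ * mu ε) :=
        mul_le_mul_of_nonneg_right hEtot hKnn
    _ ≤ ((N:ℝ) * (N':ℝ) * (ρ A * σ B)) * (lam δ * mu ε) := by
        refine mul_le_mul_of_nonneg_right ?_ hKnn
        exact mul_le_mul_of_nonneg_left hmin (by positivity)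
    _ = ((N:ℝ) * ρ A * lam δ) * ((N':ℝ) * σ B * mu ε) := by ring
/-- the Young dyadic estimate.  `t k`/`s k'` are nested
dyadically-refining partition sequences of `[a,b]`/`[c,d]` (level `k` has the
points `t k 0, …, t k (2^k)`, with `t k (2*i) = t (k-1) i` and mesh `< 4·2^{-k}`),
`F` has finite `(p,q)`-bivariation, `G` has rectangular increments controlled by
`λ(x₂-x₁)·μ(y₂-y₁)`, and `ρσ = id`.  Then the double difference of the dyadic
double Riemann–Stieltjes sums is bounded by `16` times the product of the two
Young series. -/
theorem young_dyadic_estimate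
    (a b c d p q : ℝ) (hab : a < b) (hcd : c < d) (hp : 1 ≤ p) (hq : 1 ≤ q)
    (F G : ℝ → ℝ → ℝ)
    (lam mu ρ σ : ℝ → ℝ)
    (hlam : MonotoneOn lam (Set.Ici 0)) (hmu : MonotoneOn mu (Set.Ici 0))
    (hlam0 : ∀ u ≥ (0 : ℝ), 0 ≤ lam u) (hmu0 : ∀ u ≥ (0 : ℝ), 0 ≤ mu u)
    (hρ : MonotoneOn ρ (Set.Ici 0)) (hσ : MonotoneOn σ (Set.Ici 0))
    (hρ0 : ∀ u ≥ (0 : ℝ), 0 ≤ ρ u) (hσ0 : ∀ u ≥ (0 : ℝ), 0 ≤ σ u)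
    (hρσ : ∀ u ≥ (0 : ℝ), ρ u * σ u = u)
    (hF1 : FiniteBiVar1 p a b c d F) (hF2 : FiniteBiVar2 q a b c d F)
    (hG : ∀ x₁ x₂ y₁ y₂ : ℝ, a ≤ x₁ → x₁ ≤ x₂ → x₂ ≤ b → c ≤ y₁ → y₁ ≤ y₂ → y₂ ≤ d →
      |rect G x₁ x₂ y₁ y₂| ≤ lam (x₂ - x₁) * mu (y₂ - y₁))
    (M M' : ℕ) (t s : ℕ → ℕ → ℝ)
    (ht0 : ∀ k ≤ M, (∀ i j : ℕ, i ≤ j → j ≤ 2 ^ k → t k i ≤ t k j) ∧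
      t k 0 = a ∧ t k (2 ^ k) = b)
    (htmesh : ∀ k ≤ M, ∀ i < 2 ^ k, t k (i + 1) - t k i < 4 / 2 ^ k)
    (htnest : ∀ k, 1 ≤ k → k ≤ M → ∀ i ≤ 2 ^ (k - 1), t k (2 * i) = t (k - 1) i)
    (hs0 : ∀ k' ≤ M', (∀ i j : ℕ, i ≤ j → j ≤ 2 ^ k' → s k' i ≤ s k' j) ∧
      s k' 0 = c ∧ s k' (2 ^ k') = d)
    (hsmesh : ∀ k' ≤ M', ∀ j < 2 ^ k', s k' (j + 1) - s k' j < 4 / 2 ^ k')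
    (hsnest : ∀ k', 1 ≤ k' → k' ≤ M' → ∀ j ≤ 2 ^ (k' - 1), s k' (2 * j) = s (k' - 1) j)
    (hSum1 : Summable (fun m : ℕ =>
      ρ (biVar1 p a b c d F / ((m : ℝ) + 1) ^ (1 / p)) * lam (4 / ((m : ℝ) + 1))))
    (hSum2 : Summable (fun m' : ℕ =>
      σ (biVar2 q a b c d F / ((m' : ℝ) + 1) ^ (1 / q)) * mu (4 / ((m' : ℝ) + 1))))
    (S : ℕ → ℕ → ℝ)
    (hS : ∀ n n' : ℕ, S n n' =
      ∑ i ∈ Finset.range (2 ^ n), ∑ j ∈ Finset.range (2 ^ n'),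
        F (t n (i + 1)) (s n' (j + 1)) *
          rect G (t n i) (t n (i + 1)) (s n' j) (s n' (j + 1))) :
    |S M M' - S 0 M' - S M 0 + S 0 0| ≤
      16 * (∑' m : ℕ,
          ρ (biVar1 p a b c d F / ((m : ℝ) + 1) ^ (1 / p)) * lam (4 / ((m : ℝ) + 1)))
        * (∑' m' : ℕ,
          σ (biVar2 q a b c d F / ((m' : ℝ) + 1) ^ (1 / q)) * mu (4 / ((m' : ℝ) + 1))) := by

  have hp0 : (0:ℝ) < p := lt_of_lt_of_le one_pos hp
  have hq0 : (0:ℝ) < q := lt_of_lt_of_le one_pos hq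
  have hcIcc : c ∈ Icc c d := ⟨le_refl c, le_of_lt hcd⟩
  have haIcc : a ∈ Icc a b := ⟨le_refl a, le_of_lt hab⟩
  have hV1 : 0 ≤ biVar1 p a b c d F := by
    have h0 := young_pVarNorm_nonneg (p := p) (le_of_lt hab)
      (fun x => F x c - F x c) (hF1.1 c hcIcc c hcIcc)
    exact le_trans h0 (le_csSup hF1.2 ⟨c, hcIcc, c, hcIcc, rfl⟩)
  have hV2 : 0 ≤ biVar2 q a b c d F := by
    have h0 := young_pVarNorm_nonneg (p := q) (le_of_lt hcd)
      (fun y => F a y - F a y) (hF2.1 a haIcc a haIcc)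
    exact le_trans h0 (le_csSup hF2.2 ⟨a, haIcc, a, haIcc, rfl⟩)
  set X : ℕ → ℝ := fun k =>
    (2:ℝ)^k * ρ (biVar1 p a b c d F / ((2:ℝ)^k) ^ (1/p)) * lam (4 / (2:ℝ)^(k+1)) with hX
  set Y : ℕ → ℝ := fun k' =>
    (2:ℝ)^k' * σ (biVar2 q a b c d F / ((2:ℝ)^k') ^ (1/q)) * mu (4 / (2:ℝ)^(k'+1)) with hY
  -- the per-level estimate
  have key : ∀ k < M, ∀ k' < M',
      |S (k+1) (k'+1) - S k (k'+1) - S (k+1) k' + S k k'| ≤ X k * Y k' := by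
    intro k hk k' hk'
    have hkM : k + 1 ≤ M := hk
    have hk'M : k' + 1 ≤ M' := hk'
    obtain ⟨hxmono, hxa, hxb⟩ := ht0 (k+1) hkM
    obtain ⟨hymono, hyc, hyd⟩ := hs0 (k'+1) hk'M
    have h2N : (2:ℕ)^(k+1) = 2*2^k := by rw [pow_succ]; ring
    have h2N' : (2:ℕ)^(k'+1) = 2*2^k' := by rw [pow_succ]; ring
    have hNpos : 0 < (2:ℕ)^k := Nat.pow_pos (by norm_num)
    have hN'pos : 0 < (2:ℕ)^k' := Nat.pow_pos (by norm_num)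
    have htc : ∀ r, r ≤ 2^k → t k r = t (k+1) (2*r) := by
      intro r hr
      have h := htnest (k+1) (by omega) hkM r (by simpa using hr)
      simpa using h.symm
    have hsc : ∀ r, r ≤ 2^k' → s k' r = s (k'+1) (2*r) := by
      intro r hr
      have h := hsnest (k'+1) (by omega) hk'M r (by simpa using hr)
      simpa using h.symm
    -- the refinement identity
    have hDeq : S (k+1) (k'+1) - S k (k'+1) - S (k+1) k' + S k k'
        = ∑ i ∈ Finset.range (2^k), ∑ j ∈ Finset.range (2^k'),
            (F (t (k+1) (2*i+1)) (s (k'+1) (2*j+1)) - F (t (k+1) (2*i+2)) (s (k'+1) (2*j+1))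
              - F (t (k+1) (2*i+1)) (s (k'+1) (2*j+2)) + F (t (k+1) (2*i+2)) (s (k'+1) (2*j+2)))
              * rect G (t (k+1) (2*i)) (t (k+1) (2*i+1)) (s (k'+1) (2*j)) (s (k'+1) (2*j+1)) := by
      have e0 : S (k+1) (k'+1) = ∑ i ∈ Finset.range (2*2^k), ∑ j ∈ Finset.range (2*2^k'),
          F (t (k+1) (i+1)) (s (k'+1) (j+1)) *
            rect G (t (k+1) i) (t (k+1) (i+1)) (s (k'+1) j) (s (k'+1) (j+1)) := by
        rw [hS, h2N, h2N']
      have e1 : S k (k'+1) = ∑ i ∈ Finset.range (2^k), ∑ j ∈ Finset.range (2*2^k'),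
          F (t (k+1) (2*(i+1))) (s (k'+1) (j+1)) *
            rect G (t (k+1) (2*i)) (t (k+1) (2*(i+1))) (s (k'+1) j) (s (k'+1) (j+1)) := by
        rw [hS, h2N']
        refine Finset.sum_congr rfl fun i hi => Finset.sum_congr rfl fun j hj => ?_
        have hiN : i < 2^k := Finset.mem_range.1 hi
        rw [htc i (by omega), htc (i+1) (by omega)]
      have e2 : S (k+1) k' = ∑ i ∈ Finset.range (2*2^k), ∑ j ∈ Finset.range (2^k'),
          F (t (k+1) (i+1)) (s (k'+1) (2*(j+1))) *
            rect G (t (k+1) i) (t (k+1) (i+1)) (s (k'+1) (2*j)) (s (k'+1) (2*(j+1))) := by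
        rw [hS, h2N]
        refine Finset.sum_congr rfl fun i hi => Finset.sum_congr rfl fun j hj => ?_
        have hjN : j < 2^k' := Finset.mem_range.1 hj
        rw [hsc j (by omega), hsc (j+1) (by omega)]
      have e3 : S k k' = ∑ i ∈ Finset.range (2^k), ∑ j ∈ Finset.range (2^k'),
          F (t (k+1) (2*(i+1))) (s (k'+1) (2*(j+1))) *
            rect G (t (k+1) (2*i)) (t (k+1) (2*(i+1)))
              (s (k'+1) (2*j)) (s (k'+1) (2*(j+1))) := by
        rw [hS]
        refine Finset.sum_congr rfl fun i hi => Finset.sum_congr rfl fun j hj => ?_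
        have hiN : i < 2^k := Finset.mem_range.1 hi
        have hjN : j < 2^k' := Finset.mem_range.1 hj
        rw [htc i (by omega), htc (i+1) (by omega), hsc j (by omega), hsc (j+1) (by omega)]
      rw [e0, e1, e2, e3]
      exact young_D_eq F G (2^k) (2^k') (t (k+1)) (s (k'+1))
    rw [hDeq]
    -- apply the level bound
    have hxmono2 : ∀ i j : ℕ, i ≤ j → j ≤ 2*2^k → t (k+1) i ≤ t (k+1) j := by
      intro i j h1 h2
      exact hxmono i j h1 (by omega)
    have hymono2 : ∀ i j : ℕ, i ≤ j → j ≤ 2*2^k' → s (k'+1) i ≤ s (k'+1) j := by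
      intro i j h1 h2
      exact hymono i j h1 (by omega)
    have hxb2 : t (k+1) (2*2^k) = b := by rw [← h2N]; exact hxb
    have hyd2 : s (k'+1) (2*2^k') = d := by rw [← h2N']; exact hyd
    have hδ : (0:ℝ) ≤ 4 / (2:ℝ)^(k+1) := by positivity
    have hε : (0:ℝ) ≤ 4 / (2:ℝ)^(k'+1) := by positivity
    have hxmesh : ∀ i, i < 2*2^k → t (k+1) (i+1) - t (k+1) i ≤ 4 / (2:ℝ)^(k+1) := by
      intro i hi
      exact le_of_lt (htmesh (k+1) hkM i (by omega))
    have hymesh : ∀ j, j < 2*2^k' → s (k'+1) (j+1) - s (k'+1) j ≤ 4 / (2:ℝ)^(k'+1) := by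
      intro j hj
      exact le_of_lt (hsmesh (k'+1) hk'M j (by omega))
    have hlev := young_level_bound a b c d p q hp hq F G lam mu ρ σ
      hlam hmu hlam0 hmu0 hρ hσ hρ0 hσ0 hρσ hF1 hF2 hV1 hV2 hG
      (2^k) (2^k') hNpos hN'pos (t (k+1)) (s (k'+1))
      hxmono2 hxa hxb2 hymono2 hyc hyd2
      (4 / (2:ℝ)^(k+1)) (4 / (2:ℝ)^(k'+1)) hδ hε hxmesh hymesh
    have hcast : (((2:ℕ)^k : ℕ) : ℝ) = (2:ℝ)^k := by push_cast; ring
    have hcast' : (((2:ℕ)^k' : ℕ) : ℝ) = (2:ℝ)^k' := by push_cast; ring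
    refine hlev.trans (le_of_eq ?_)
    rw [hX, hY]
    simp only [hcast, hcast']
  -- telescoping
  have tele : S M M' - S 0 M' - S M 0 + S 0 0
      = ∑ k ∈ Finset.range M, ∑ k' ∈ Finset.range M',
          (S (k+1) (k'+1) - S k (k'+1) - S (k+1) k' + S k k') := by
    have inner : ∀ k, ∑ k' ∈ Finset.range M',
        (S (k+1) (k'+1) - S k (k'+1) - S (k+1) k' + S k k')
        = (S (k+1) M' - S k M') - (S (k+1) 0 - S k 0) := by
      intro k
      calc ∑ k' ∈ Finset.range M', (S (k+1) (k'+1) - S k (k'+1) - S (k+1) k' + S k k')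
          = ∑ k' ∈ Finset.range M',
              ((S (k+1) (k'+1) - S k (k'+1)) - (S (k+1) k' - S k k')) :=
            Finset.sum_congr rfl fun k' _ => by ring
        _ = (S (k+1) M' - S k M') - (S (k+1) 0 - S k 0) :=
            Finset.sum_range_sub (fun k' => S (k+1) k' - S k k') M'
    calc S M M' - S 0 M' - S M 0 + S 0 0
        = (S M M' - S M 0) - (S 0 M' - S 0 0) := by ring
      _ = ∑ k ∈ Finset.range M, ((S (k+1) M' - S (k+1) 0) - (S k M' - S k 0)) :=
          (Finset.sum_range_sub (fun k => S k M' - S k 0) M).symm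
      _ = ∑ k ∈ Finset.range M, ((S (k+1) M' - S k M') - (S (k+1) 0 - S k 0)) :=
          Finset.sum_congr rfl fun k _ => by ring
      _ = ∑ k ∈ Finset.range M, ∑ k' ∈ Finset.range M',
            (S (k+1) (k'+1) - S k (k'+1) - S (k+1) k' + S k k') :=
          Finset.sum_congr rfl fun k _ => (inner k).symm
  have habs : |S M M' - S 0 M' - S M 0 + S 0 0|
      ≤ (∑ k ∈ Finset.range M, X k) * (∑ k' ∈ Finset.range M', Y k') := by
    rw [tele, Finset.sum_mul_sum]
    refine le_trans (Finset.abs_sum_le_sum_abs _ _) (Finset.sum_le_sum fun k hk => ?_)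
    refine le_trans (Finset.abs_sum_le_sum_abs _ _) (Finset.sum_le_sum fun k' hk' => ?_)
    exact key k (Finset.mem_range.1 hk) k' (Finset.mem_range.1 hk')
  have hXsum : ∑ k ∈ Finset.range M, X k
      ≤ 2 * ∑' m : ℕ, ρ (biVar1 p a b c d F / ((m : ℝ) + 1) ^ (1 / p))
          * lam (4 / ((m : ℝ) + 1)) :=
    young_block_le_tsum ρ lam hρ hlam hρ0 hlam0 _ p hV1 hp hSum1 M
  have hYsum : ∑ k' ∈ Finset.range M', Y k'
      ≤ 2 * ∑' m' : ℕ, σ (biVar2 q a b c d F / ((m' : ℝ) + 1) ^ (1 / q))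
          * mu (4 / ((m' : ℝ) + 1)) :=
    young_block_le_tsum σ mu hσ hmu hσ0 hmu0 _ q hV2 hq hSum2 M'
  have hYnn : 0 ≤ ∑ k' ∈ Finset.range M', Y k' := by
    refine Finset.sum_nonneg fun k' _ => ?_
    simp only [hY]
    exact mul_nonneg (mul_nonneg (by positivity) (hσ0 _ (by positivity)))
      (hmu0 _ (by positivity))
  have hT1 : 0 ≤ ∑' m : ℕ, ρ (biVar1 p a b c d F / ((m : ℝ) + 1) ^ (1 / p))
      * lam (4 / ((m : ℝ) + 1)) :=
    tsum_nonneg fun m => mul_nonneg (hρ0 _ (by positivity)) (hlam0 _ (by positivity))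
  have hT2 : 0 ≤ ∑' m' : ℕ, σ (biVar2 q a b c d F / ((m' : ℝ) + 1) ^ (1 / q))
      * mu (4 / ((m' : ℝ) + 1)) :=
    tsum_nonneg fun m => mul_nonneg (hσ0 _ (by positivity)) (hmu0 _ (by positivity))
  refine habs.trans ?_
  have h2 := mul_le_mul hXsum hYsum hYnn (by linarith)
  nlinarith [mul_nonneg hT1 hT2]
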